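/- arXiv:1401.6036 — 3 statements merged into one kernel-verified Lean document; each statement's English description precedes it below -/
import Mathlib

section
/- Let D be a semi self-dual binary code of even length n. Then there are exactly three self-dual codes C with D ⊆ C ⊆ D⊥ (each such C necessarily satisfies D ⊊ C ⊊ D⊥); i.e. the set {C : D ⊆ C ⊆ D⊥ and C = C⊥} has cardinality 3. -/
/-- The Hamming weight of a word in `(ZMod 2)^n`. -/
def wt {n : ℕ} (c : Fin n → ZMod 2) : ℕ :=
  (Finset.univ.filter fun i => c i ≠ 0).card

/-- The dual code of a binary linear code. -/
def dualCode {n : ℕ} (D : Submodule (ZMod 2) (Fin n → ZMod 2)) :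
    Submodule (ZMod 2) (Fin n → ZMod 2) where
  carrier := {v | ∀ c ∈ D, ∑ i, v i * c i = 0}
  zero_mem' := by intro c hc; simp
  add_mem' := by
    intro a b ha hb c hc
    simp [add_mul, Finset.sum_add_distrib, ha c hc, hb c hc]
  smul_mem' := by
    intro r a ha c hc
    simp [mul_assoc, ← Finset.mul_sum, ha c hc]

/-- A semi self-dual code: self-orthogonal, contains the all-ones vector,
and has codimension 2 in its dual. -/
def IsSemiSelfDual {n : ℕ} (D : Submodule (ZMod 2) (Fin n → ZMod 2)) : Prop :=
  D ≤ dualCode D ∧ (fun _ => 1 : Fin n → ZMod 2) ∈ D ∧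
    Module.finrank (ZMod 2) (dualCode D) = Module.finrank (ZMod 2) D + 2

/-- The minimum distance: minimum weight of a nonzero codeword. -/
noncomputable def minDist {n : ℕ} (C : Submodule (ZMod 2) (Fin n → ZMod 2)) : ℕ :=
  sInf {k | ∃ c ∈ C, c ≠ 0 ∧ wt c = k}

/-- Doubly-even codes. -/
def IsDoublyEven {n : ℕ} (D : Submodule (ZMod 2) (Fin n → ZMod 2)) : Prop :=
  ∀ c ∈ D, wt c % 4 = 0

open Module Submodule

lemma mem_dualCode {n : ℕ} {D : Submodule (ZMod 2) (Fin n → ZMod 2)} {v : Fin n → ZMod 2} :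
    v ∈ dualCode D ↔ ∀ c ∈ D, ∑ i, v i * c i = 0 := Iff.rfl

def bil (n : ℕ) : (Fin n → ZMod 2) →ₗ[ZMod 2] (Fin n → ZMod 2) →ₗ[ZMod 2] ZMod 2 :=
  LinearMap.mk₂ (ZMod 2) (fun v c => ∑ i, v i * c i)
    (fun _ _ _ => by simp [add_mul, Finset.sum_add_distrib])
    (fun _ _ _ => by simp [Finset.mul_sum, mul_assoc])
    (fun _ _ _ => by simp [mul_add, Finset.sum_add_distrib])
    (fun _ _ _ => by simp [Finset.mul_sum, mul_left_comm])

lemma bil_apply {n : ℕ} (v c : Fin n → ZMod 2) : bil n v c = ∑ i, v i * c i := rfl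

lemma bil_comm {n : ℕ} (v c : Fin n → ZMod 2) : bil n v c = bil n c v := by
  simp [bil_apply, mul_comm]

lemma bil_inj (n : ℕ) : Function.Injective (bil n) := by
  intro v w h
  funext i
  have h2 := congrArg (fun f => f (Pi.single i 1)) h
  simpa [bil_apply, Pi.single_apply, mul_ite, Finset.sum_ite_eq'] using h2

lemma finrank_dualCode {n : ℕ} (C : Submodule (ZMod 2) (Fin n → ZMod 2)) :
    finrank (ZMod 2) C + finrank (ZMod 2) (dualCode C) = n := by
  have hinj := bil_inj n
  have hsurj : Function.Surjective (bil n) :=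
    (LinearMap.injective_iff_surjective_of_finrank_eq_finrank
      (by rw [Subspace.dual_finrank_eq])).mp hinj
  let e : (Fin n → ZMod 2) ≃ₗ[ZMod 2] Module.Dual (ZMod 2) (Fin n → ZMod 2) :=
    LinearEquiv.ofBijective (bil n) ⟨hinj, hsurj⟩
  have hcomap : dualCode C = (C.dualAnnihilator).comap (e : (Fin n → ZMod 2) →ₗ[ZMod 2] _) := by
    ext v
    simp only [mem_dualCode, Submodule.mem_comap, Submodule.mem_dualAnnihilator]
    rfl
  rw [hcomap, Submodule.comap_equiv_eq_map_symm, LinearEquiv.finrank_map_eq]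
  have h1 : finrank (ZMod 2) C.dualAnnihilator
      = finrank (ZMod 2) ((Fin n → ZMod 2) ⧸ C) :=
    (LinearEquiv.finrank_eq (Subspace.quotEquivAnnihilator C)).symm
  rw [h1, add_comm, Submodule.finrank_quotient_add_finrank]
  simp [Module.finrank_pi]

lemma sup_span_finrank {n : ℕ} {D : Submodule (ZMod 2) (Fin n → ZMod 2)}
    {v : Fin n → ZMod 2} (hv : v ∉ D) :
    finrank (ZMod 2) ↥(D ⊔ Submodule.span (ZMod 2) {v}) = finrank (ZMod 2) D + 1 := by
  have hv0 : v ≠ 0 := fun h => hv (h ▸ D.zero_mem)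
  have hle : finrank (ZMod 2) ↥(D ⊔ Submodule.span (ZMod 2) {v})
      ≤ finrank (ZMod 2) D + 1 := by
    have := Submodule.finrank_sup_add_finrank_inf_eq D (Submodule.span (ZMod 2) {v})
    have hs : finrank (ZMod 2) ↥(Submodule.span (ZMod 2) {v}) = 1 :=
      finrank_span_singleton hv0
    omega
  have hlt : finrank (ZMod 2) D < finrank (ZMod 2) ↥(D ⊔ Submodule.span (ZMod 2) {v}) := by
    apply Submodule.finrank_lt_finrank_of_lt
    refine lt_of_le_of_ne le_sup_left (fun h => hv ?_)
    rw [h]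
    exact Submodule.mem_sup_right (Submodule.subset_span rfl)
  omega

lemma sup_span_congr {n : ℕ} {D : Submodule (ZMod 2) (Fin n → ZMod 2)}
    {u z : Fin n → ZMod 2} (h : u - z ∈ D) :
    D ⊔ Submodule.span (ZMod 2) {u} = D ⊔ Submodule.span (ZMod 2) {z} := by
  have key : ∀ a b : Fin n → ZMod 2, a - b ∈ D →
      a ∈ D ⊔ Submodule.span (ZMod 2) {b} := by
    intro a b hab
    have : a = (a - b) + b := by abel
    rw [this]
    exact Submodule.add_mem _ (Submodule.mem_sup_left hab)
      (Submodule.mem_sup_right (Submodule.subset_span rfl))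
  apply le_antisymm <;>
    refine sup_le le_sup_left ((Submodule.span_le).mpr ?_) <;>
    intro x hx <;> rw [Set.mem_singleton_iff.mp hx]
  · exact key u z h
  · exact key z u (by simpa using D.neg_mem h)

lemma orth_sup_span {n : ℕ} {D : Submodule (ZMod 2) (Fin n → ZMod 2)}
    (hsub : D ≤ dualCode D) (hone : (fun _ => 1 : Fin n → ZMod 2) ∈ D)
    {z : Fin n → ZMod 2} (hz : z ∈ dualCode D) :
    D ⊔ Submodule.span (ZMod 2) {z} ≤ dualCode (D ⊔ Submodule.span (ZMod 2) {z}) := by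
  have hzz : bil n z z = 0 := by
    have h1 : bil n z z = bil n z (fun _ => 1) := by
      simp only [bil_apply]
      refine Finset.sum_congr rfl fun i _ => ?_
      have : ∀ a : ZMod 2, a * a = a * 1 := by decide
      exact this (z i)
    rw [h1]
    exact hz _ hone
  intro x hx c hc
  obtain ⟨dx, hdx, sx, hsx, rfl⟩ := Submodule.mem_sup.mp hx
  obtain ⟨dc, hdc, sc, hsc, rfl⟩ := Submodule.mem_sup.mp hc
  obtain ⟨a, rfl⟩ := Submodule.mem_span_singleton.mp hsx
  obtain ⟨b, rfl⟩ := Submodule.mem_span_singleton.mp hsc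
  have b1 : bil n dx dc = 0 := hsub hdx dc hdc
  have b2 : bil n z dc = 0 := hz dc hdc
  have b3 : bil n dx z = 0 := by rw [bil_comm]; exact hz dx hdx
  show bil n (dx + a • z) (dc + b • z) = 0
  simp [map_add, LinearMap.add_apply, map_smul, LinearMap.smul_apply, b1, b2, b3, hzz]

/-- A semi self-dual code of even length is contained in exactly three self-dual
codes, each lying strictly between `D` and its dual. -/
theorem three_self_dual_codes_between
    {n : ℕ} (hn : Even n) (D : Submodule (ZMod 2) (Fin n → ZMod 2))
    (hD : IsSemiSelfDual D) :
    {C : Submodule (ZMod 2) (Fin n → ZMod 2) |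
        D ≤ C ∧ C ≤ dualCode D ∧ C = dualCode C}.ncard = 3 ∧
    ∀ C : Submodule (ZMod 2) (Fin n → ZMod 2),
      D ≤ C → C ≤ dualCode D → C = dualCode C → D < C ∧ C < dualCode D := by
  obtain ⟨hsub, hone, hrank⟩ := hD
  have hnd : finrank (ZMod 2) D + (finrank (ZMod 2) D + 2) = n := by
    have h := finrank_dualCode D
    omega
  set d := finrank (ZMod 2) D with hd
  have hrankC : ∀ C : Submodule (ZMod 2) (Fin n → ZMod 2), C = dualCode C →
      finrank (ZMod 2) C = d + 1 := by
    intro C hC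
    have h := finrank_dualCode C
    rw [← hC] at h
    omega
  have hmem : ∀ z ∈ dualCode D, z ∉ D →
      D ≤ D ⊔ Submodule.span (ZMod 2) {z} ∧
      D ⊔ Submodule.span (ZMod 2) {z} ≤ dualCode D ∧
      D ⊔ Submodule.span (ZMod 2) {z}
        = dualCode (D ⊔ Submodule.span (ZMod 2) {z}) := by
    intro z hzE hzD
    refine ⟨le_sup_left, sup_le hsub (Submodule.span_le.mpr ?_), ?_⟩
    · intro x hx; rw [Set.mem_singleton_iff.mp hx]; exact hzE
    · have hfr : finrank (ZMod 2) ↥(D ⊔ Submodule.span (ZMod 2) {z}) = d + 1 :=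
        sup_span_finrank hzD
      have h2 := finrank_dualCode (D ⊔ Submodule.span (ZMod 2) {z})
      exact Submodule.eq_of_le_of_finrank_le (orth_sup_span hsub hone hzE) (by omega)
  have hDE : D < dualCode D := by
    refine lt_of_le_of_ne hsub (fun h => ?_)
    rw [← h] at hrank
    omega
  obtain ⟨v, hvE, hvD⟩ := SetLike.exists_of_lt hDE
  set C1 := D ⊔ Submodule.span (ZMod 2) {v} with hC1
  have hC1E : C1 ≤ dualCode D := (hmem v hvE hvD).2.1
  have hC1r : finrank (ZMod 2) C1 = d + 1 := sup_span_finrank hvD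
  have hC1lt : C1 < dualCode D :=
    Submodule.lt_of_le_of_finrank_lt_finrank hC1E (by omega)
  obtain ⟨w, hwE, hwC1⟩ := SetLike.exists_of_lt hC1lt
  have hwD : w ∉ D := fun h => hwC1 (Submodule.mem_sup_left h)
  have hvwE : v + w ∈ dualCode D := add_mem hvE hwE
  have hvC1 : v ∈ C1 := Submodule.mem_sup_right (Submodule.subset_span rfl)
  have hvwD : v + w ∉ D := by
    intro h
    apply hwC1
    have hw : w = (v + w) - v := by abel
    rw [hw]
    exact sub_mem (Submodule.mem_sup_left h) hvC1
  set C2 := D ⊔ Submodule.span (ZMod 2) {w} with hC2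
  set C3 := D ⊔ Submodule.span (ZMod 2) {v + w} with hC3
  have hwC2 : w ∈ C2 := Submodule.mem_sup_right (Submodule.subset_span rfl)
  have hvwC3 : v + w ∈ C3 := Submodule.mem_sup_right (Submodule.subset_span rfl)
  have h01 : ∀ x : ZMod 2, x = 0 ∨ x = 1 := by decide
  -- decomposition of the dual code
  have hEeq : C1 ⊔ Submodule.span (ZMod 2) {w} = dualCode D := by
    apply Submodule.eq_of_le_of_finrank_le
    · refine sup_le hC1E (Submodule.span_le.mpr ?_)
      intro x hx; rw [Set.mem_singleton_iff.mp hx]; exact hwE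
    · have h3 : finrank (ZMod 2) ↥(C1 ⊔ Submodule.span (ZMod 2) {w})
          = finrank (ZMod 2) C1 + 1 := sup_span_finrank hwC1
      omega
  -- distinctness
  have h12 : C1 ≠ C2 := by
    intro h
    exact hwC1 (h ▸ hwC2)
  have h13 : C1 ≠ C3 := by
    intro h
    apply hwC1
    have hw : w = (v + w) - v := by abel
    rw [hw]
    exact sub_mem (h ▸ hvwC3) hvC1
  have h23 : C2 ≠ C3 := by
    intro h
    have hvw2 : v + w ∈ C2 := h ▸ hvwC3
    obtain ⟨dc, hdc, s, hs, heq⟩ := Submodule.mem_sup.mp hvw2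
    obtain ⟨b, rfl⟩ := Submodule.mem_span_singleton.mp hs
    rcases h01 b with rfl | rfl
    · apply hvwD
      rw [← heq]
      simpa using hdc
    · apply hvD
      have h2 : dc + w = v + w := by simpa using heq
      have : v = dc := (add_right_cancel h2).symm
      rw [this]; exact hdc
  -- the set equality
  have hSeq : {C : Submodule (ZMod 2) (Fin n → ZMod 2) |
      D ≤ C ∧ C ≤ dualCode D ∧ C = dualCode C} = {C1, C2, C3} := by
    ext C
    simp only [Set.mem_setOf_eq, Set.mem_insert_iff, Set.mem_singleton_iff]
    constructor
    · rintro ⟨hDC, hCE, hCd⟩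
      have hCr : finrank (ZMod 2) C = d + 1 := hrankC C hCd
      have hDC' : D < C := Submodule.lt_of_le_of_finrank_lt_finrank hDC (by omega)
      obtain ⟨u, huC, huD⟩ := SetLike.exists_of_lt hDC'
      have hCeq : D ⊔ Submodule.span (ZMod 2) {u} = C := by
        apply Submodule.eq_of_le_of_finrank_le
        · refine sup_le hDC (Submodule.span_le.mpr ?_)
          intro x hx; rw [Set.mem_singleton_iff.mp hx]; exact huC
        · have := sup_span_finrank huD
          omega
      have huE : u ∈ C1 ⊔ Submodule.span (ZMod 2) {w} := by
        rw [hEeq]; exact hCE huC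
      obtain ⟨c1, hc1, s, hs, heq⟩ := Submodule.mem_sup.mp huE
      obtain ⟨b, rfl⟩ := Submodule.mem_span_singleton.mp hs
      obtain ⟨dd, hdd, sv, hsv, heq1⟩ := Submodule.mem_sup.mp hc1
      obtain ⟨a, rfl⟩ := Submodule.mem_span_singleton.mp hsv
      have hu : u = dd + a • v + b • w := by rw [← heq, ← heq1]
      rcases h01 a with rfl | rfl <;> rcases h01 b with rfl | rfl
      · exfalso
        apply huD
        rw [hu]
        simpa using hdd
      · -- u = dd + w : C = C2
        right; left
        rw [← hCeq, hC2]
        apply sup_span_congr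
        have : u - w = dd := by rw [hu]; simp
        rw [this]; exact hdd
      · -- u = dd + v : C = C1
        left
        rw [← hCeq, hC1]
        apply sup_span_congr
        have : u - v = dd := by rw [hu]; simp
        rw [this]; exact hdd
      · -- u = dd + v + w : C = C3
        right; right
        rw [← hCeq, hC3]
        apply sup_span_congr
        have : u - (v + w) = dd := by rw [hu]; simp
        rw [this]; exact hdd
    · rintro (rfl | rfl | rfl)
      · exact hmem v hvE hvD
      · exact hmem w hwE hwD
      · exact hmem (v + w) hvwE hvwD
  constructor
  · rw [hSeq]
    exact Set.ncard_eq_three.mpr ⟨C1, C2, C3, h12, h13, h23, rfl⟩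
  · intro C hDC hCE hCd
    have hCr : finrank (ZMod 2) C = d + 1 := hrankC C hCd
    exact ⟨Submodule.lt_of_le_of_finrank_lt_finrank hDC (by omega),
      Submodule.lt_of_le_of_finrank_lt_finrank hCE (by omega)⟩
end

section
/- Let N ≥ 2 be a natural number, let L = ⌊(N−2)/4⌋, and let ε₀, ε₁, …, ε_L be real numbers. Suppose that every coefficient of the real polynomial P(Y) = (1+Y⁴) · ∑_{i=0}^{L} εᵢ · Y^{N−2−4i} · (1−Y⁴)^{2i} is a non-negative integer. Then each εᵢ is a non-negative integer. -/
open Polynomial Finset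


def ggh : ℕ → (ℕ → ℕ) × (ℕ → ℕ)
  | 0 => (fun i => if i = 0 then 1 else 0, fun _ => 0)
  | m+1 =>
    let p := ggh m
    let h2 : ℕ → ℕ := fun i => p.2 i + (match i with | 0 => 0 | j+1 => p.1 j)
    (fun i => p.1 i + h2 i, h2)

def gg (m i : ℕ) : ℕ := (ggh m).1 i
def hh (m i : ℕ) : ℕ := (ggh m).2 i

lemma gg_zero (i : ℕ) : gg 0 i = if i = 0 then 1 else 0 := rfl
lemma hh_zero (i : ℕ) : hh 0 i = 0 := rfl
lemma hh_succ_zero (m : ℕ) : hh (m+1) 0 = hh m 0 := rfl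
lemma hh_succ_succ (m i : ℕ) : hh (m+1) (i+1) = hh m (i+1) + gg m i := rfl
lemma gg_succ (m i : ℕ) : gg (m+1) i = gg m i + hh (m+1) i := rfl

lemma gg_hh_eq_zero : ∀ m i, m < i → gg m i = 0 ∧ hh m i = 0 := by
  intro m
  induction m with
  | zero => intro i hi; constructor
            · simp [gg_zero]; omega
            · simp [hh_zero]
  | succ m ih =>
    intro i hi
    obtain ⟨j, rfl⟩ : ∃ j, i = j + 1 := ⟨i - 1, by omega⟩
    have h1 := ih (j+1) (by omega)
    have h2 := ih j (by omega)
    have : hh (m+1) (j+1) = 0 := by rw [hh_succ_succ, h1.2, h2.1]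
    exact ⟨by rw [gg_succ, h1.1, this], this⟩

lemma gg_eq_zero {m i : ℕ} (h : m < i) : gg m i = 0 := (gg_hh_eq_zero m i h).1
lemma hh_eq_zero {m i : ℕ} (h : m < i) : hh m i = 0 := (gg_hh_eq_zero m i h).2

lemma gg_diag : ∀ m, gg m m = 1 := by
  intro m
  induction m with
  | zero => rfl
  | succ m ih =>
    rw [gg_succ, gg_eq_zero (by omega), hh_succ_succ, hh_eq_zero (by omega), ih]



noncomputable def BP (M i : ℕ) : Polynomial ℝ := X^(M - 4*i) * (1 - X^4)^(2*i)

noncomputable def SgP (M m : ℕ) : Polynomial ℝ := ∑ i ∈ range (m+1), (gg m i : Polynomial ℝ) * BP M i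
noncomputable def ShP (M m : ℕ) : Polynomial ℝ := ∑ i ∈ range (m+1), (hh m i : Polynomial ℝ) * BP M i

lemma BP_rec (M i : ℕ) (hi : 4*(i+1) ≤ M) : X^4 * BP M (i+1) = (1 - X^4)^2 * BP M i := by
  unfold BP
  have e1 : M - 4*i = (M - 4*(i+1)) + 4 := by omega
  have e2 : 2*(i+1) = 2*i + 2 := by omega
  rw [e1, e2, pow_add, pow_add]
  ring

lemma Sh_rec (M m : ℕ) (h4 : 4*(m+1) ≤ M) :
    X^4 * ShP M (m+1) = X^4 * ShP M m + (1-X^4)^2 * SgP M m := by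
  have step1 : ShP M (m+1)
      = ∑ i ∈ range (m+1), ((hh m (i+1) : Polynomial ℝ) * BP M (i+1)
          + (gg m i : Polynomial ℝ) * BP M (i+1)) + (hh m 0 : Polynomial ℝ) * BP M 0 := by
    rw [ShP, Finset.sum_range_succ']
    rw [hh_succ_zero]
    congr 1
    apply Finset.sum_congr rfl
    intro i _
    rw [hh_succ_succ]
    push_cast
    ring
  rw [step1]
  rw [Finset.sum_add_distrib]
  rw [mul_add, mul_add, Finset.mul_sum, Finset.mul_sum]
  have key : ∀ i ∈ range (m+1), X^4 * ((gg m i : Polynomial ℝ) * BP M (i+1))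
      = (1-X^4)^2 * ((gg m i : Polynomial ℝ) * BP M i) := by
    intro i hi
    simp only [Finset.mem_range] at hi
    have := BP_rec M i (by omega)
    calc X^4 * ((gg m i : Polynomial ℝ) * BP M (i+1))
        = (gg m i : Polynomial ℝ) * (X^4 * BP M (i+1)) := by ring
      _ = (gg m i : Polynomial ℝ) * ((1-X^4)^2 * BP M i) := by rw [this]
      _ = (1-X^4)^2 * ((gg m i : Polynomial ℝ) * BP M i) := by ring
  rw [Finset.sum_congr rfl key]
  have shm : ∑ i ∈ range (m+1), X^4 * ((hh m (i+1) : Polynomial ℝ) * BP M (i+1))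
        + X^4 * ((hh m 0 : Polynomial ℝ) * BP M 0)
      = X^4 * ShP M m := by
    rw [← Finset.sum_range_succ' (fun i => X^4 * ((hh m i : Polynomial ℝ) * BP M i)) (m+1)]
    rw [Finset.sum_range_succ, hh_eq_zero (Nat.lt_succ_self m)]
    rw [ShP, Finset.mul_sum]
    simp
  rw [SgP, Finset.mul_sum]
  linear_combination shm

lemma Sg_succ (M m : ℕ) : SgP M (m+1) = SgP M m + ShP M (m+1) := by
  rw [SgP, SgP, ShP]
  have : ∀ i ∈ range (m+1+1), (gg (m+1) i : Polynomial ℝ) * BP M i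
      = (gg m i : Polynomial ℝ) * BP M i + (hh (m+1) i : Polynomial ℝ) * BP M i := by
    intro i _
    rw [gg_succ]; push_cast; ring
  rw [Finset.sum_congr rfl this, Finset.sum_add_distrib, Finset.sum_range_succ
    (fun i => (gg m i : Polynomial ℝ) * BP M i), gg_eq_zero (Nat.lt_succ_self m)]
  push_cast
  ring

lemma PgPh (M : ℕ) : ∀ m, 4*m ≤ M →
    ((1+X^4) * SgP M m = X^(M-4*m) + X^(M+4*m+4)) ∧
    ((1+X^4) * ShP M m + X^(M-4*m+4) + X^(M+4*m) = X^(M-4*m) + X^(M+4*m+4)) := by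
  intro m
  induction m with
  | zero =>
    intro _
    have hM : M - 4*0 = M := by omega
    have hM2 : M + 4*0 = M := by omega
    have hM3 : M + 4*0 + 4 = M + 4 := by omega
    rw [hM, hM2, hM3]
    constructor
    · rw [SgP, Finset.sum_range_one, BP]
      rw [gg_zero]
      simp [pow_add]
      ring
    · rw [ShP, Finset.sum_range_one, hh_zero]
      push_cast
      ring
  | succ m ih =>
    intro h4
    obtain ⟨hPg, hPh⟩ := ih (by omega)
    have hRec := Sh_rec M m h4
    set a := M - 4*(m+1) with ha
    have E1 : M - 4*m = a + 4 := by omega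
    have E2 : M + 4*m + 4 = a + 8*m + 8 := by omega
    have E3 : M - 4*m + 4 = a + 8 := by omega
    have E4 : M + 4*m = a + 8*m + 4 := by omega
    have E6 : M + 4*(m+1) + 4 = a + 8*m + 12 := by omega
    have E8 : M + 4*(m+1) = a + 8*m + 8 := by omega
    rw [E1, E2] at hPg
    rw [E1, E4] at hPh
    rw [E6, E8]
    have hgoalPh : X^4 * ((1+X^4) * ShP M (m+1) + X^(a+4) + X^(a+8*m+8))
        = X^4 * ((X:Polynomial ℝ)^a + X^(a+8*m+12)) := by
      linear_combination (1+X^4) * hRec + X^4 * hPh + (1-X^4)^2 * hPg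
    have hPh' := mul_left_cancel₀ (pow_ne_zero 4 (X_ne_zero (R := ℝ))) hgoalPh
    refine ⟨?_, hPh'⟩
    rw [Sg_succ]
    linear_combination hPg + hPh'


lemma Pg (M m : ℕ) (h : 4*m ≤ M) : (1+X^4) * SgP M m = X^(M-4*m) + X^(M+4*m+4) :=
  (PgPh M m h).1



lemma exists_c (s : ℕ) (ε : ℕ → ℝ) :
    ∃ c : ℕ → ℝ, ∀ i < s, ε i = ∑ m ∈ range s, c m * (gg m i : ℝ) := by
  induction s generalizing ε with
  | zero => exact ⟨0, fun i hi => absurd hi (by omega)⟩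
  | succ s ih =>
    obtain ⟨c, hc⟩ := ih (fun i => ε i - ε s * (gg s i : ℝ))
    refine ⟨fun m => if m = s then ε s else c m, ?_⟩
    intro i hi
    rw [Finset.sum_range_succ]
    have hrest : ∑ m ∈ range s, (if m = s then ε s else c m) * (gg m i : ℝ)
        = ∑ m ∈ range s, c m * (gg m i : ℝ) := by
      apply Finset.sum_congr rfl
      intro m hm
      rw [if_neg (by simp at hm; omega)]
    rw [hrest]
    simp only [if_pos rfl]
    rcases Nat.lt_or_ge i s with hlt | hge
    · rw [← hc i hlt]; norm_num
    · have : i = s := by omega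
      subst this
      have : ∑ m ∈ range i, c m * (gg m i : ℝ) = 0 := by
        apply Finset.sum_eq_zero
        intro m hm
        rw [gg_eq_zero (by simp at hm; omega)]
        simp
      rw [this, gg_diag]
      norm_num

/-- If all the coefficients of the real polynomial
`(1+Y⁴) · ∑_{i=0}^{⌊(N-2)/4⌋} εᵢ Y^{N-2-4i} (1-Y⁴)^{2i}` are non-negative
integers, then each `εᵢ` is a non-negative integer. -/


theorem eps_nonneg_integers
    (N : ℕ) (hN : 2 ≤ N) (ε : ℕ → ℝ)
    (h : ∀ k : ℕ, ∃ a : ℕ,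
      ((1 + X ^ 4) *
        ∑ i ∈ Finset.range ((N - 2) / 4 + 1),
          C (ε i) * X ^ (N - 2 - 4 * i) * (1 - X ^ 4) ^ (2 * i) :
        Polynomial ℝ).coeff k = (a : ℝ)) :
    ∀ i ≤ (N - 2) / 4, ∃ a : ℕ, ε i = (a : ℝ) := by
  set M := N - 2 with hMdef
  set L := M / 4 with hLdef
  obtain ⟨c, hc⟩ := exists_c (L + 1) ε
  set P : Polynomial ℝ := (1 + X ^ 4) *
      ∑ i ∈ Finset.range (L + 1), C (ε i) * X ^ (M - 4 * i) * (1 - X ^ 4) ^ (2 * i) with hPdef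
  have hmle : ∀ m ∈ range (L+1), 4 * m ≤ M := by
    intro m hm
    simp only [mem_range] at hm
    omega
  have hP : P = ∑ m ∈ range (L+1), C (c m) * (X^(M - 4*m) + X^(M + 4*m + 4)) := by
    have e1 : ∑ i ∈ Finset.range (L + 1), C (ε i) * X ^ (M - 4 * i) * (1 - X ^ 4) ^ (2 * i)
        = ∑ m ∈ range (L+1), C (c m) * SgP M m := by
      have e2 : ∀ i ∈ range (L+1), C (ε i) * X ^ (M - 4 * i) * (1 - X ^ 4) ^ (2 * i)
          = ∑ m ∈ range (L+1), C (c m) * ((gg m i : Polynomial ℝ) * BP M i) := by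
        intro i hi
        rw [hc i (mem_range.mp hi)]
        rw [map_sum, Finset.sum_mul, Finset.sum_mul]
        apply Finset.sum_congr rfl
        intro m _
        rw [map_mul, map_natCast, BP]
        ring
      rw [Finset.sum_congr rfl e2, Finset.sum_comm]
      apply Finset.sum_congr rfl
      intro m hm
      rw [SgP, Finset.mul_sum]
      symm
      apply Finset.sum_subset
      · intro x hx
        simp only [mem_range] at hm hx ⊢
        omega
      · intro x _ hx
        simp only [mem_range, not_lt] at hx
        rw [gg_eq_zero (by omega : m < x)]
        simp
    rw [hPdef, e1, Finset.mul_sum]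
    apply Finset.sum_congr rfl
    intro m hm
    rw [← Pg M m (hmle m hm)]
    ring
  have hcoeff : ∀ m ∈ range (L+1), P.coeff (M - 4*m) = c m := by
    intro m hm
    have h4m := hmle m hm
    rw [hP, finset_sum_coeff]
    rw [Finset.sum_eq_single m]
    · have h1 : ¬ (M - 4*m = M + 4*m + 4) := by omega
      simp [coeff_C_mul, coeff_add, coeff_X_pow, h1]
    · intro b hb hbm
      have h4b := hmle b hb
      have hb' := mem_range.mp hb
      have h1 : ¬ (M - 4*m = M - 4*b) := by omega
      have h2 : ¬ (M - 4*m = M + 4*b + 4) := by omega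
      simp [coeff_C_mul, coeff_add, coeff_X_pow, h1, h2]
    · intro hm'; exact absurd hm hm'
  intro i hi
  have key : ε i = ∑ m ∈ range (L+1), c m * (gg m i : ℝ) := hc i (by omega)
  refine ⟨∑ m ∈ range (L+1), (h (M - 4*m)).choose * gg m i, ?_⟩
  rw [key]
  push_cast
  apply Finset.sum_congr rfl
  intro m hm
  have hcm : c m = ((h (M - 4*m)).choose : ℝ) := by
    rw [← hcoeff m hm]
    exact (h (M - 4*m)).choose_spec
  rw [hcm]
end

section
/- There exists a doubly-even semi self-dual binary code D of length 24 whose dual code D⊥ has dimension 13 and minimum distance exactly 4 (so the bound d(D⊥) ≤ 4μ for doubly-even semi self-dual codes of length 24μ is sharp for μ = 1). -/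
-- auxiliary general lemmas
lemma zmod2_em (x : ZMod 2) : x = 0 ∨ x = 1 := by revert x; decide

lemma mem_dualCode_span {n : ℕ} (S : Set (Fin n → ZMod 2)) (v : Fin n → ZMod 2) :
    v ∈ dualCode (Submodule.span (ZMod 2) S) ↔ ∀ c ∈ S, ∑ i, v i * c i = 0 := by
  constructor
  · intro h c hc
    exact h c (Submodule.subset_span hc)
  · intro h c hc
    induction hc using Submodule.span_induction with
    | mem x hx => exact h x hx
    | zero => simp
    | add x y hx hy px py => simp [mul_add, Finset.sum_add_distrib, px, py]
    | smul r x hx px =>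
        simp only [Pi.smul_apply, smul_eq_mul, mul_left_comm, ← Finset.mul_sum, px, mul_zero]

lemma sum_mul_eq_sum_support {n : ℕ} (v c : Fin n → ZMod 2) :
    ∑ i, v i * c i = ∑ i ∈ Finset.univ.filter (fun i => v i ≠ 0), c i := by
  rw [Finset.sum_filter]
  apply Finset.sum_congr rfl
  intro i _
  rcases zmod2_em (v i) with h | h <;> simp [h]

lemma wt_eq_zero_iff {n : ℕ} (v : Fin n → ZMod 2) : wt v = 0 ↔ v = 0 := by
  unfold wt
  rw [Finset.card_eq_zero, Finset.filter_eq_empty_iff]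
  constructor
  · intro h; funext i
    have := h (Finset.mem_univ i)
    simpa using this
  · intro h i _; simp [h]

lemma wt_add_four {n : ℕ} (a b : Fin n → ZMod 2) (hab : ∑ i, a i * b i = 0)
    (ha : wt a % 4 = 0) (hb : wt b % 4 = 0) : wt (a + b) % 4 = 0 := by
  classical
  set s := Finset.univ.filter (fun i => a i ≠ 0) with hs
  set t := Finset.univ.filter (fun i => b i ≠ 0) with ht
  have hsupp : Finset.univ.filter (fun i => (a + b) i ≠ 0) = (s \ t) ∪ (t \ s) := by
    ext i
    simp only [hs, ht, Finset.mem_union, Finset.mem_sdiff, Finset.mem_filter,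
      Finset.mem_univ, true_and, Pi.add_apply]
    rcases zmod2_em (a i) with h1 | h1 <;> rcases zmod2_em (b i) with h2 | h2 <;>
      simp [h1, h2] <;> decide
  have hparity : ((s ∩ t).card : ZMod 2) = 0 := by
    rw [← hab]
    have : ∑ i, a i * b i = ∑ i, (if i ∈ s ∩ t then (1 : ZMod 2) else 0) := by
      apply Finset.sum_congr rfl
      intro i _
      simp only [hs, ht, Finset.mem_inter, Finset.mem_filter, Finset.mem_univ, true_and]
      rcases zmod2_em (a i) with h1 | h1 <;> rcases zmod2_em (b i) with h2 | h2 <;>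
        simp [h1, h2]
    rw [this, Finset.sum_ite_mem, Finset.univ_inter, Finset.sum_const, nsmul_eq_mul, mul_one]
  have hdvd : 2 ∣ (s ∩ t).card := by
    rwa [ZMod.natCast_eq_zero_iff] at hparity
  have hdisj : Disjoint (s \ t) (t \ s) := Finset.sdiff_disjoint.mono_right Finset.sdiff_subset
  have hcard : wt (a + b) = (s \ t).card + (t \ s).card := by
    unfold wt
    rw [hsupp, Finset.card_union_of_disjoint hdisj]
  have h1 : (s \ t).card + (s ∩ t).card = s.card := Finset.card_sdiff_add_card_inter s t
  have h2 : (t \ s).card + (t ∩ s).card = t.card := Finset.card_sdiff_add_card_inter t s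
  have h3 : (t ∩ s).card = (s ∩ t).card := by rw [Finset.inter_comm]
  have hwa : wt a = s.card := rfl
  have hwb : wt b = t.card := rfl
  obtain ⟨m, hm⟩ := hdvd
  omega

-- the explicit code
def gmask : Fin 11 → Nat := ![255, 15, 51, 65280, 3840, 13056, 16711680, 983040, 3342336, 5570560, 21845]
def wmask : Fin 11 → Nat := ![22, 17, 5, 5379, 4352, 1280, 1441792, 1114112, 327680, 196608, 3]
def gvec (j : Fin 11) (i : Fin 24) : ZMod 2 := if Nat.testBit (gmask j) i.val then 1 else 0
def wvec (j : Fin 11) (i : Fin 24) : ZMod 2 := if Nat.testBit (wmask j) i.val then 1 else 0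
def v4 (i : Fin 24) : ZMod 2 := if i.val < 4 then 1 else 0

theorem h_orth : ∀ j k : Fin 11, ∑ i, gvec j i * gvec k i = 0 := by decide
theorem h_dub : ∀ j : Fin 11, wt (gvec j) % 4 = 0 := by decide
theorem h_wg : ∀ j k : Fin 11, ∑ i, wvec j i * gvec k i = if j = k then 1 else 0 := by decide
theorem h_one : ∀ i : Fin 24, gvec 0 i + gvec 3 i + gvec 6 i = 1 := by decide
theorem h_sep : ∀ i1 i2 : Fin 24, i1 ≠ i2 → ∃ j, gvec j i1 ≠ gvec j i2 := by decide
theorem h_v4w : wt v4 = 4 := by decide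
theorem h_v4o : ∀ j, ∑ i, v4 i * gvec j i = 0 := by decide

def Dcode : Submodule (ZMod 2) (Fin 24 → ZMod 2) := Submodule.span (ZMod 2) (Set.range gvec)

lemma mem_dual_iff (v : Fin 24 → ZMod 2) :
    v ∈ dualCode Dcode ↔ ∀ j, ∑ i, v i * gvec j i = 0 := by
  rw [Dcode, mem_dualCode_span]
  constructor
  · intro h j; exact h _ ⟨j, rfl⟩
  · rintro h c ⟨j, rfl⟩; exact h j

lemma Dcode_self_orth : Dcode ≤ dualCode Dcode := by
  intro c hc
  rw [mem_dual_iff]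
  intro j
  induction hc using Submodule.span_induction with
  | mem x hx => obtain ⟨k, rfl⟩ := hx; exact h_orth k j
  | zero => simp
  | add x y hx hy px py => simp [add_mul, Finset.sum_add_distrib, px, py]
  | smul r x hx px =>
      simp only [Pi.smul_apply, smul_eq_mul, mul_assoc, ← Finset.mul_sum, px, mul_zero]

lemma Dcode_doubly_even : ∀ c ∈ Dcode, wt c % 4 = 0 := by
  intro c hc
  induction hc using Submodule.span_induction with
  | mem x hx => obtain ⟨k, rfl⟩ := hx; exact h_dub k
  | zero => simp [(wt_eq_zero_iff (0 : Fin 24 → ZMod 2)).mpr rfl]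
  | add x y hx hy px py =>
      apply wt_add_four x y _ px py
      exact Dcode_self_orth hx y hy
  | smul r x hx px =>
      rcases zmod2_em r with h | h <;> subst h
      · simp [(wt_eq_zero_iff (0 : Fin 24 → ZMod 2)).mpr rfl]
      · simpa using px

lemma one_mem_Dcode : (fun _ => 1 : Fin 24 → ZMod 2) ∈ Dcode := by
  have : (fun _ => 1 : Fin 24 → ZMod 2) = gvec 0 + gvec 3 + gvec 6 := by
    funext i; exact (h_one i).symm
  rw [this]
  exact Submodule.add_mem _ (Submodule.add_mem _
    (Submodule.subset_span ⟨0, rfl⟩) (Submodule.subset_span ⟨3, rfl⟩))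
    (Submodule.subset_span ⟨6, rfl⟩)

-- linear maps
def Gmap : (Fin 11 → ZMod 2) →ₗ[ZMod 2] (Fin 24 → ZMod 2) where
  toFun x := fun i => ∑ j, x j * gvec j i
  map_add' := by intro x y; funext i; simp [add_mul, Finset.sum_add_distrib]
  map_smul' := by
    intro r x; funext i
    simp [Finset.mul_sum, mul_assoc]

def Tmap : (Fin 24 → ZMod 2) →ₗ[ZMod 2] (Fin 11 → ZMod 2) where
  toFun v := fun j => ∑ i, v i * gvec j i
  map_add' := by intro x y; funext j; simp [add_mul, Finset.sum_add_distrib]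
  map_smul' := by
    intro r x; funext j
    simp [Finset.mul_sum, mul_assoc]

lemma range_Gmap : LinearMap.range Gmap = Dcode := by
  apply le_antisymm
  · rintro _ ⟨x, rfl⟩
    have : Gmap x = ∑ j, x j • gvec j := by
      funext i
      simp [Gmap, Finset.sum_apply]
    rw [this]
    exact Submodule.sum_mem _ fun j _ =>
      Submodule.smul_mem _ _ (Submodule.subset_span ⟨j, rfl⟩)
  · rw [Dcode, Submodule.span_le]
    rintro _ ⟨j, rfl⟩
    refine ⟨fun k => if k = j then 1 else 0, ?_⟩
    funext i
    simp [Gmap, ite_mul]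

lemma wG_cancel (x : Fin 11 → ZMod 2) (j : Fin 11) :
    ∑ i, wvec j i * (Gmap x i) = x j := by
  show ∑ i, wvec j i * ∑ k, x k * gvec k i = x j
  have : ∀ i, wvec j i * ∑ k, x k * gvec k i = ∑ k, x k * (wvec j i * gvec k i) := by
    intro i
    rw [Finset.mul_sum]
    exact Finset.sum_congr rfl fun k _ => by ring
  simp_rw [this]
  rw [Finset.sum_comm]
  have : ∀ k, ∑ i, x k * (wvec j i * gvec k i) = x k * (if j = k then 1 else 0) := by
    intro k
    rw [← Finset.mul_sum, h_wg j k]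
  simp_rw [this]
  simp [Finset.mul_sum]

lemma Gmap_inj : Function.Injective Gmap := by
  intro a b h
  funext j
  rw [← wG_cancel a j, ← wG_cancel b j, h]

lemma finrank_Dcode : Module.finrank (ZMod 2) Dcode = 11 := by
  rw [← range_Gmap, LinearMap.finrank_range_of_inj Gmap_inj, Module.finrank_fin_fun]

lemma ker_Tmap : LinearMap.ker Tmap = dualCode Dcode := by
  ext v
  rw [LinearMap.mem_ker, mem_dual_iff, funext_iff]
  simp [Tmap]

lemma Tmap_surj : Function.Surjective Tmap := by
  intro y
  refine ⟨fun i => ∑ k, y k * wvec k i, ?_⟩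
  funext j
  show ∑ i, (∑ k, y k * wvec k i) * gvec j i = y j
  have : ∀ i, (∑ k, y k * wvec k i) * gvec j i = ∑ k, y k * (wvec k i * gvec j i) := by
    intro i
    rw [Finset.sum_mul]
    exact Finset.sum_congr rfl fun k _ => by ring
  simp_rw [this]
  rw [Finset.sum_comm]
  have : ∀ k, ∑ i, y k * (wvec k i * gvec j i) = y k * (if k = j then 1 else 0) := by
    intro k
    rw [← Finset.mul_sum, h_wg k j]
  simp_rw [this]
  simp [Finset.mul_sum]

lemma finrank_dual : Module.finrank (ZMod 2) (dualCode Dcode) = 13 := by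
  have h := LinearMap.finrank_range_add_finrank_ker Tmap
  rw [LinearMap.range_eq_top.mpr Tmap_surj, ker_Tmap] at h
  rw [finrank_top, Module.finrank_fin_fun, Module.finrank_fin_fun] at h
  omega

lemma zmod2_ne_add (x y : ZMod 2) (h : x ≠ y) : x + y ≠ 0 := by revert x y; decide

lemma dual_min_wt (v : Fin 24 → ZMod 2) (hv : v ∈ dualCode Dcode) (hne : v ≠ 0) :
    4 ≤ wt v := by
  classical
  by_contra hlt
  push_neg at hlt
  set s := Finset.univ.filter (fun i => v i ≠ 0) with hs
  have hwt : wt v = s.card := rfl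
  have hpos : 0 < wt v := by
    rcases Nat.eq_zero_or_pos (wt v) with h0 | h0
    · exact absurd (wt_eq_zero_iff v |>.mp h0) hne
    · exact h0
  -- parity: wt v even, using 1 ∈ Dcode
  have hone := hv _ one_mem_Dcode
  have hsum1 : ∑ i, v i * 1 = (s.card : ZMod 2) := by
    rw [sum_mul_eq_sum_support, ← hs, Finset.sum_const, nsmul_eq_mul, mul_one]
  rw [hsum1] at hone
  have heven : 2 ∣ s.card := by rwa [ZMod.natCast_eq_zero_iff] at hone
  have hcard2 : s.card = 2 := by omega
  obtain ⟨i1, i2, hij, hpair⟩ := Finset.card_eq_two.mp hcard2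
  obtain ⟨j, hj⟩ := h_sep i1 i2 hij
  have := hv (gvec j) (Submodule.subset_span ⟨j, rfl⟩)
  rw [sum_mul_eq_sum_support, ← hs, hpair, Finset.sum_pair hij] at this
  exact zmod2_ne_add _ _ hj this


/-- There is a doubly-even semi self-dual code of length 24 whose dual code has
dimension 13 and minimum distance exactly 4. -/
theorem exists_doubly_even_semi_self_dual_length_24_dual_distance_4 :
    ∃ D : Submodule (ZMod 2) (Fin 24 → ZMod 2), IsSemiSelfDual D ∧ IsDoublyEven D ∧
      Module.finrank (ZMod 2) (dualCode D) = 13 ∧ minDist (dualCode D) = 4 := by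
  refine ⟨Dcode, ⟨Dcode_self_orth, one_mem_Dcode, ?_⟩, Dcode_doubly_even, finrank_dual, ?_⟩
  · rw [finrank_dual, finrank_Dcode]
  · have h4mem : 4 ∈ {k | ∃ c ∈ dualCode Dcode, c ≠ 0 ∧ wt c = k} := by
      refine ⟨v4, ?_, ?_, h_v4w⟩
      · rw [mem_dual_iff]; exact h_v4o
      · decide
    apply le_antisymm
    · exact Nat.sInf_le h4mem
    · apply le_csInf ⟨4, h4mem⟩
      rintro k ⟨c, hc, hne, rfl⟩
      exact dual_min_wt c hc hne
end
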